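/- With p_xy defined recursively by p_xy(3,ℓ) = 1/3 for ℓ = 0,1,2, p_xy(k,0) = 1/C(k+1,2) + (C(k-1,2)/C(k+1,2))*p_xy(k-1,0) for k ≥ 4, and p_xy(k,ℓ) = (C(k-1,2)/C(k,2))*p_xy(k-1,ℓ-1) for k ≥ 4, k > ℓ ≥ 1: whenever k ≥ 4 and 1 ≤ ℓ < k with k - ℓ ∈ {1, 2, 3}, one has p_xy(k, ℓ) = 2/(k*(k-1)). -/

import Mathlib

/-- `C2 n = C(n,2) = n(n-1)/2` as a rational number. -/
def C2 (n : ℕ) : ℚ := (n : ℚ) * ((n : ℚ) - 1) / 2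

theorem stmt10 (p_xy : ℕ → ℕ → ℚ)
    (h3 : ∀ ℓ, ℓ ≤ 2 → p_xy 3 ℓ = 1/3)
    (h0 : ∀ k, 4 ≤ k →
      p_xy k 0 = 1 / C2 (k+1) + (C2 (k-1) / C2 (k+1)) * p_xy (k-1) 0)
    (hxy : ∀ k ℓ, 4 ≤ k → 1 ≤ ℓ → ℓ < k →
      p_xy k ℓ = (C2 (k-1) / C2 k) * p_xy (k-1) (ℓ-1)) :
    ∀ k ℓ, 4 ≤ k → 1 ≤ ℓ → ℓ < k → (k - ℓ = 1 ∨ k - ℓ = 2 ∨ k - ℓ = 3) →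
      p_xy k ℓ = 2 / ((k : ℚ) * ((k : ℚ) - 1)) := by
  suffices H : ∀ k, 4 ≤ k → ∀ ℓ, 1 ≤ ℓ → ℓ < k → (k - ℓ = 1 ∨ k - ℓ = 2 ∨ k - ℓ = 3) →
      p_xy k ℓ = 2 / ((k : ℚ) * ((k : ℚ) - 1)) by
    intro k ℓ hk h1 h2 hd; exact H k hk ℓ h1 h2 hd
  intro k hk
  induction k, hk using Nat.le_induction with
  | base =>
    intro ℓ h1 h2 _
    interval_cases ℓ <;>
      rw [hxy 4 _ (by norm_num) (by norm_num) (by norm_num)] <;>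
      norm_num [h3, C2]
  | succ k hk ih =>
    intro ℓ h1 h2 hd
    have hℓ2 : 2 ≤ ℓ := by omega
    rw [hxy (k+1) ℓ (by omega) h1 h2]
    have : p_xy (k + 1 - 1) (ℓ - 1) = 2 / ((k : ℚ) * ((k : ℚ) - 1)) := by
      have := ih (ℓ - 1) (by omega) (by omega) (by omega)
      simpa using this
    rw [this]
    have hk0 : (k : ℚ) ≠ 0 := by positivity
    have hk1 : (k : ℚ) - 1 ≠ 0 := by
      have : (2:ℚ) ≤ (k:ℚ) := by exact_mod_cast (by omega : 2 ≤ k)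
      linarith
    have hk2 : (k : ℚ) + 1 ≠ 0 := by positivity
    simp only [C2, Nat.add_sub_cancel, Nat.cast_add, Nat.cast_one]
    field_simp
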